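/- arXiv:2404.00745 — 2 statements merged into one kernel-verified Lean document; each statement's English description precedes it below -/
import Mathlib

section
/- Let p be a prime and let G be a pro-p group. Then G is Frattini-resistant if and only if the following holds: for every element x ∈ G and every topologically finitely generated closed subgroup H of G, if x^p ∈ Φ(H) then x ∈ H. -/
/-- A pro-`p` group: a compact, Hausdorff, totally disconnected topological group in which
every open normal subgroup has index a power of `p`. -/
def IsProPGroup (p : ℕ) (G : Type*) [Group G] [TopologicalSpace G] [IsTopologicalGroup G] : Prop :=
  CompactSpace G ∧ T2Space G ∧ TotallyDisconnectedSpace G ∧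
    ∀ N : Subgroup G, N.Normal → IsOpen (N : Set G) → ∃ k : ℕ, N.index = p ^ k

/-- A subgroup is topologically finitely generated (and closed) if it is the topological
closure of a subgroup generated by finitely many elements. -/
def IsTopFG {G : Type*} [Group G] [TopologicalSpace G] [IsTopologicalGroup G]
    (H : Subgroup G) : Prop :=
  ∃ S : Set G, S.Finite ∧ (Subgroup.closure S).topologicalClosure = H

open scoped commutatorElement

/-- The Frattini subgroup of a closed subgroup `H` of a pro-`p` group: the topological closure
of the (abstract) subgroup generated by all `p`-th powers and all commutators of elements
of `H`. -/
def frattiniTop (p : ℕ) {G : Type*} [Group G] [TopologicalSpace G] [IsTopologicalGroup G]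
    (H : Subgroup G) : Subgroup G :=
  (Subgroup.closure
      ({x | ∃ h ∈ H, x = h ^ p} ∪ {x | ∃ h₁ ∈ H, ∃ h₂ ∈ H, x = ⁅h₁, h₂⁆})).topologicalClosure

/-- A pro-`p` group is Frattini-resistant if for all topologically finitely generated closed
subgroups `H₁, H₂` one has `Φ(H₁) ⊆ Φ(H₂) ↔ H₁ ⊆ H₂`. -/
def FrattiniResistant (p : ℕ) (G : Type*) [Group G] [TopologicalSpace G]
    [IsTopologicalGroup G] : Prop :=
  ∀ H₁ H₂ : Subgroup G, IsTopFG H₁ → IsTopFG H₂ →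
    (frattiniTop p H₁ ≤ frattiniTop p H₂ ↔ H₁ ≤ H₂)

/-- A pro-`p` group `G` is Frattini-resistant if and only if for every
`x ∈ G` and every topologically finitely generated closed subgroup `H` of `G`,
`x ^ p ∈ Φ(H)` implies `x ∈ H`. -/
theorem frattiniResistant_iff_pow_mem (p : ℕ) (hp : p.Prime) (G : Type*) [Group G]
    [TopologicalSpace G] [IsTopologicalGroup G] (hG : IsProPGroup p G) :
    FrattiniResistant p G ↔
      ∀ (x : G) (H : Subgroup G), IsTopFG H → x ^ p ∈ frattiniTop p H → x ∈ H := by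
  haveI hT2 : T2Space G := hG.2.1
  constructor
  · intro hR x H hH hxp
    set C : Subgroup G := Subgroup.closure {x} with hC
    set H₁ : Subgroup G := C.topologicalClosure with hH₁
    have hfg₁ : IsTopFG H₁ := ⟨{x}, Set.finite_singleton x, rfl⟩
    have hx₁ : x ∈ H₁ := C.le_topologicalClosure (Subgroup.subset_closure rfl)
    -- H₁ is commutative
    have hcommC : ∀ a ∈ (C : Set G), ∀ b ∈ (C : Set G), a * b = b * a := by
      intro a ha b hb
      rw [SetLike.mem_coe, hC, Subgroup.mem_closure_singleton] at ha hb
      obtain ⟨m, rfl⟩ := ha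
      obtain ⟨n, rfl⟩ := hb
      exact Commute.zpow_zpow_self x m n
    have hcomm : ∀ a ∈ H₁, ∀ b ∈ H₁, a * b = b * a := by
      have step1 : ∀ a ∈ (C : Set G), ∀ b ∈ H₁, a * b = b * a := by
        intro a ha b hb
        have hcl : IsClosed {y : G | a * y = y * a} :=
          isClosed_eq (continuous_const.mul continuous_id) (continuous_id.mul continuous_const)
        exact hcl.closure_subset_iff.mpr (fun y hy => hcommC a ha y hy) hb
      intro a ha b hb
      have hcl : IsClosed {y : G | y * b = b * y} :=
        isClosed_eq (continuous_id.mul continuous_const) (continuous_const.mul continuous_id)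
      exact hcl.closure_subset_iff.mpr (fun y hy => step1 y hy b hb) ha
    have hclosed : IsClosed ((frattiniTop p H : Set G)) :=
      Subgroup.isClosed_topologicalClosure _
    have key : frattiniTop p H₁ ≤ frattiniTop p H := by
      apply Subgroup.topologicalClosure_minimal _ ?_ hclosed
      rw [Subgroup.closure_le]
      rintro y (⟨h, hh, rfl⟩ | ⟨h₁, hh₁, h₂, hh₂, rfl⟩)
      · -- p-th power of h ∈ H₁
        have h1 : h ∈ closure ((fun g : G => g) '' (C : Set G)) := by
          rw [Set.image_id']; exact hh
        have h2 : h ^ p ∈ closure ((fun g : G => g ^ p) '' (C : Set G)) := by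
          have := (continuous_pow p (M := G)).continuousOn (s := (C : Set G))
          have hmap := image_closure_subset_closure_image (f := fun g : G => g ^ p)
            (s := (C : Set G)) (continuous_pow p)
          exact hmap ⟨h, hh, rfl⟩
        have hsub : (fun g : G => g ^ p) '' (C : Set G) ⊆ (frattiniTop p H : Set G) := by
          rintro _ ⟨g, hg, rfl⟩
          rw [hC, SetLike.mem_coe, Subgroup.mem_closure_singleton] at hg
          obtain ⟨n, rfl⟩ := hg
          have hxpmem : x ^ p ∈ frattiniTop p H := hxp
          have : (x ^ (n : ℤ)) ^ p = (x ^ p) ^ (n : ℤ) := by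
            rw [← zpow_natCast (x ^ (n : ℤ)) p, ← zpow_mul, ← zpow_natCast x p, ← zpow_mul,
              mul_comm]
          show (x ^ (n : ℤ)) ^ p ∈ (frattiniTop p H : Set G)
          rw [this]
          exact Subgroup.zpow_mem _ hxpmem n
        exact hclosed.closure_eq ▸ closure_mono hsub h2
      · -- commutator of elements of H₁ is trivial
        have : h₁ * h₂ = h₂ * h₁ := hcomm h₁ hh₁ h₂ hh₂
        have : ⁅h₁, h₂⁆ = (1 : G) := by
          rw [commutatorElement_def, this]
          group
        rw [this]
        exact Subgroup.one_mem _
    exact (hR H₁ H hfg₁ hH).mp key hx₁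
  · intro h H₁ H₂ hfg₁ hfg₂
    constructor
    · intro hΦ x hx
      refine h x H₂ hfg₂ (hΦ ?_)
      exact Subgroup.le_topologicalClosure _
        (Subgroup.subset_closure (Or.inl ⟨x, hx, rfl⟩))
    · intro hle
      apply Subgroup.topologicalClosure_minimal _ ?_
        (Subgroup.isClosed_topologicalClosure _)
      rw [Subgroup.closure_le]
      intro y hy
      refine Subgroup.le_topologicalClosure _ (Subgroup.subset_closure ?_)
      rcases hy with ⟨g, hg, rfl⟩ | ⟨g₁, hg₁, g₂, hg₂, rfl⟩
      · exact Or.inl ⟨g, hle hg, rfl⟩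
      · exact Or.inr ⟨g₁, hle hg₁, g₂, hle hg₂, rfl⟩
end

section
/- Let p be a prime and let G ⊆ GL₃(ℤ_p) be the Heisenberg pro-p group of 3×3 upper unitriangular matrices over ℤ_p, with the topology induced from the entrywise topology on matrices. Let x = I + E₁₂, y = I + E₂₃, z = I + E₁₃ (where E_{ij} denote matrix units), and let H be the closure of the subgroup of G generated by x and y^p. Then z^p ∈ Φ(H) and z ∉ H. Consequently, Φ(⟨z⟩) ⊆ Φ(H) although ⟨z⟩ ⊄ H (where ⟨z⟩ is the closure of the subgroup generated by z), so G is neither Frattini-resistant nor Frattini-injective. -/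
open Matrix

variable (p : ℕ) [Fact p.Prime]

/-- `3 × 3` matrices over `ℤ_p`. -/
abbrev Mat3 (p : ℕ) [Fact p.Prime] := Matrix (Fin 3) (Fin 3) ℤ_[p]

/-- Elementary transvection `I + c · Eᵢⱼ` (for `i ≠ j`), as a unit of the matrix ring,
i.e. as an element of `GL₃(ℤ_p)`. -/
noncomputable def transvection3 (i j : Fin 3) (hij : i ≠ j) (c : ℤ_[p]) : (Mat3 p)ˣ where
  val := 1 + Matrix.single i j c
  inv := 1 - Matrix.single i j c
  val_inv := by
    have h : Matrix.single i j c * Matrix.single i j c = (0 : Mat3 p) :=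
      by simp [hij.symm]
    have : (1 + Matrix.single i j c) * (1 - Matrix.single i j c)
        = 1 - Matrix.single i j c * Matrix.single i j c := by noncomm_ring
    rw [this, h, sub_zero]
  inv_val := by
    have h : Matrix.single i j c * Matrix.single i j c = (0 : Mat3 p) :=
      by simp [hij.symm]
    have : (1 - Matrix.single i j c) * (1 + Matrix.single i j c)
        = 1 - Matrix.single i j c * Matrix.single i j c := by noncomm_ring
    rw [this, h, sub_zero]

/-- The Heisenberg pro-`p` group: the subgroup of `GL₃(ℤ_p)` of upper unitriangular
matrices. -/
def heisenberg : Subgroup (Mat3 p)ˣ where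
  carrier := {M | (M : Mat3 p) 0 0 = 1 ∧ (M : Mat3 p) 1 1 = 1 ∧ (M : Mat3 p) 2 2 = 1 ∧
    (M : Mat3 p) 1 0 = 0 ∧ (M : Mat3 p) 2 0 = 0 ∧ (M : Mat3 p) 2 1 = 0}
  one_mem' := by
    refine ⟨?_, ?_, ?_, ?_, ?_, ?_⟩ <;> simp [Matrix.one_apply]
  mul_mem' := by
    rintro a b ⟨a1, a2, a3, a4, a5, a6⟩ ⟨b1, b2, b3, b4, b5, b6⟩
    refine ⟨?_, ?_, ?_, ?_, ?_, ?_⟩ <;>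
      simp [Units.val_mul, Matrix.mul_apply, Fin.sum_univ_three, a1, a2, a3, a4, a5, a6,
        b1, b2, b3, b4, b5, b6]
  inv_mem' := by
    rintro a ⟨a1, a2, a3, a4, a5, a6⟩
    have hNM : (↑a⁻¹ : Mat3 p) * (a : Mat3 p) = 1 := by
      rw [← Units.val_mul, inv_mul_cancel, Units.val_one]
    set N : Mat3 p := (↑a⁻¹ : Mat3 p) with hN
    have e : ∀ i j : Fin 3, (N * (a : Mat3 p)) i j = (1 : Mat3 p) i j := by
      intro i j; rw [hNM]
    have e10 := e 1 0
    have e20 := e 2 0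
    have e21 := e 2 1
    have e00 := e 0 0
    have e11 := e 1 1
    have e22 := e 2 2
    simp [Matrix.mul_apply, Fin.sum_univ_three, a1, a2, a3, a4, a5, a6,
      Matrix.one_apply] at e10 e20 e21 e00 e11 e22
    have h10 : N 1 0 = 0 := e10
    have h20 : N 2 0 = 0 := e20
    have h21 : N 2 1 = 0 := by
      rw [h20] at e21; simpa using e21
    have h00 : N 0 0 = 1 := e00
    have h11 : N 1 1 = 1 := by
      rw [h10] at e11; simpa using e11
    have h22 : N 2 2 = 1 := by
      rw [h20, h21] at e22; simpa using e22
    exact ⟨h00, h11, h22, h10, h20, h21⟩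

/-- `x = I + E₁₂`. -/
noncomputable def xH : ↥(heisenberg p) :=
  ⟨transvection3 p 0 1 (by decide) 1, by
    refine ⟨?_, ?_, ?_, ?_, ?_, ?_⟩ <;>
      simp [transvection3, Matrix.one_apply, Matrix.single]⟩

/-- `y = I + E₂₃`. -/
noncomputable def yH : ↥(heisenberg p) :=
  ⟨transvection3 p 1 2 (by decide) 1, by
    refine ⟨?_, ?_, ?_, ?_, ?_, ?_⟩ <;>
      simp [transvection3, Matrix.one_apply, Matrix.single]⟩

/-- `z = I + E₁₃`. -/
noncomputable def zH : ↥(heisenberg p) :=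
  ⟨transvection3 p 0 2 (by decide) 1, by
    refine ⟨?_, ?_, ?_, ?_, ?_, ?_⟩ <;>
      simp [transvection3, Matrix.one_apply, Matrix.single]⟩

section FrattiniPrelude

open scoped commutatorElement

/-- Frattini-injectivity. -/
def FrattiniInjective (p : ℕ) (G : Type*) [Group G] [TopologicalSpace G]
    [IsTopologicalGroup G] : Prop :=
  ∀ H₁ H₂ : Subgroup G, IsTopFG H₁ → IsTopFG H₂ →
    frattiniTop p H₁ = frattiniTop p H₂ → H₁ = H₂

end FrattiniPrelude

noncomputable def mkU (a b c : ℤ_[p]) : (Mat3 p)ˣ where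
  val := !![1, a, c; 0, 1, b; 0, 0, 1]
  inv := !![1, -a, a*b - c; 0, 1, -b; 0, 0, 1]
  val_inv := by
    ext i j
    fin_cases i <;> fin_cases j <;>
      simp [Matrix.mul_apply, Fin.sum_univ_three, Matrix.vecHead, Matrix.vecTail,
        Matrix.one_apply] <;> ring
  inv_val := by
    ext i j
    fin_cases i <;> fin_cases j <;>
      simp [Matrix.mul_apply, Fin.sum_univ_three, Matrix.vecHead, Matrix.vecTail,
        Matrix.one_apply] <;> ring

noncomputable def mkG (a b c : ℤ_[p]) : ↥(heisenberg p) :=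
  ⟨mkU p a b c, by
    refine ⟨?_, ?_, ?_, ?_, ?_, ?_⟩ <;> simp [mkU, Matrix.vecHead, Matrix.vecTail]⟩

lemma mkG_mul (a b c a' b' c' : ℤ_[p]) :
    mkG p a b c * mkG p a' b' c' = mkG p (a+a') (b+b') (c+c'+a*b') := by
  apply Subtype.ext
  apply Units.ext
  show (!![1, a, c; 0, 1, b; 0, 0, 1] * !![1, a', c'; 0, 1, b'; 0, 0, 1] : Mat3 p) = _
  ext i j
  fin_cases i <;> fin_cases j <;>
    simp [mkU, mkG, Matrix.mul_apply, Fin.sum_univ_three, Matrix.vecHead, Matrix.vecTail] <;> ring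

lemma mkG_one : mkG p 0 0 0 = 1 := by
  apply Subtype.ext
  apply Units.ext
  show (!![(1:ℤ_[p]), 0, 0; 0, 1, 0; 0, 0, 1]) = 1
  ext i j
  fin_cases i <;> fin_cases j <;>
    simp [Matrix.one_apply, Matrix.vecHead, Matrix.vecTail]

lemma mkG_eqargs {a b c a' b' c' : ℤ_[p]} (h1 : a = a') (h2 : b = b') (h3 : c = c') :
    mkG p a b c = mkG p a' b' c' := by rw [h1, h2, h3]

lemma mkG_inv (a b c : ℤ_[p]) : (mkG p a b c)⁻¹ = mkG p (-a) (-b) (a*b - c) := by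
  apply inv_eq_of_mul_eq_one_right
  rw [mkG_mul, ← mkG_one p]
  exact mkG_eqargs p (by ring) (by ring) (by ring)

open scoped commutatorElement

lemma mkG_comm (a b c a' b' c' : ℤ_[p]) :
    ⁅mkG p a b c, mkG p a' b' c'⁆ = mkG p 0 0 (a*b' - a'*b) := by
  rw [commutatorElement_def, mkG_inv, mkG_inv, mkG_mul, mkG_mul, mkG_mul]
  exact mkG_eqargs p (by ring) (by ring) (by ring)

lemma mkG_pow (a b c : ℤ_[p]) (n : ℕ) :
    (mkG p a b c) ^ n = mkG p ((n:ℤ_[p])*a) ((n:ℤ_[p])*b) ((n:ℤ_[p])*c + ((n.choose 2 : ℕ):ℤ_[p]) * (a*b)) := by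
  induction n with
  | zero => rw [pow_zero, ← mkG_one p]; exact mkG_eqargs p (by simp) (by simp) (by simp)
  | succ n ih =>
    rw [pow_succ, ih, mkG_mul]
    refine mkG_eqargs p (by push_cast; ring) (by push_cast; ring) ?_
    have : (n+1).choose 2 = n.choose 2 + n := by
      rw [Nat.choose_succ_succ]
      simp [Nat.choose_one_right, Nat.add_comm]
    rw [this]
    push_cast
    ring

lemma entry01 (a b c : ℤ_[p]) : ((mkG p a b c).1 : Mat3 p) 0 1 = a := by simp [mkG, mkU]
lemma entry12 (a b c : ℤ_[p]) : ((mkG p a b c).1 : Mat3 p) 1 2 = b := by simp [mkG, mkU]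
lemma entry02 (a b c : ℤ_[p]) : ((mkG p a b c).1 : Mat3 p) 0 2 = c := by simp [mkG, mkU]

lemma heis_eta (g : ↥(heisenberg p)) :
    g = mkG p ((g.1 : Mat3 p) 0 1) ((g.1 : Mat3 p) 1 2) ((g.1 : Mat3 p) 0 2) := by
  obtain ⟨u, h1, h2, h3, h4, h5, h6⟩ := g
  apply Subtype.ext
  apply Units.ext
  show (u : Mat3 p) = _
  ext i j
  fin_cases i <;> fin_cases j <;>
    simp [mkG, mkU, h1, h2, h3, h4, h5, h6, Matrix.vecHead, Matrix.vecTail]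

def pSet : Set ℤ_[p] := Set.range fun t => (p:ℤ_[p]) * t

lemma isClosed_pSet : IsClosed (pSet p) :=
  (isCompact_range (continuous_const.mul continuous_id)).isClosed

lemma zero_mem_pSet : (0:ℤ_[p]) ∈ pSet p := ⟨0, by ring⟩
lemma p_mul_mem_pSet (t : ℤ_[p]) : (p:ℤ_[p]) * t ∈ pSet p := ⟨t, rfl⟩

lemma pSet_add {x y : ℤ_[p]} (hx : x ∈ pSet p) (hy : y ∈ pSet p) : x + y ∈ pSet p := by
  obtain ⟨s, rfl⟩ := hx; obtain ⟨t, rfl⟩ := hy; exact ⟨s + t, by ring⟩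

lemma pSet_neg {x : ℤ_[p]} (hx : x ∈ pSet p) : -x ∈ pSet p := by
  obtain ⟨s, rfl⟩ := hx; exact ⟨-s, by ring⟩

lemma pSet_mul_left (y : ℤ_[p]) {x : ℤ_[p]} (hx : x ∈ pSet p) : y * x ∈ pSet p := by
  obtain ⟨s, rfl⟩ := hx; exact ⟨y * s, by ring⟩

lemma one_not_mem_pSet : (1:ℤ_[p]) ∉ pSet p := by
  rintro ⟨t, ht⟩
  have hu : IsUnit ((p:ℤ_[p])) := IsUnit.of_mul_eq_one t ht
  have := PadicInt.isUnit_iff.mp hu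
  rw [PadicInt.norm_p] at this
  have hp : (1:ℝ) < (p:ℝ) := by
    exact_mod_cast (Fact.out : p.Prime).one_lt
  have : (p:ℝ) = 1 := by
    field_simp at this
    linarith [this]
  linarith

lemma continuous_entry (i j : Fin 3) :
    Continuous fun g : ↥(heisenberg p) => ((g.1 : Mat3 p) i j) :=
  (Units.continuous_val.comp continuous_subtype_val).matrix_elem i j

/-- subgroup with entries (1,2) and (0,2) in pℤₚ -/
def Hbc : Subgroup ↥(heisenberg p) where
  carrier := {g | (g.1 : Mat3 p) 1 2 ∈ pSet p ∧ (g.1 : Mat3 p) 0 2 ∈ pSet p}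
  one_mem' := by
    constructor <;>
    · show ((1 : (Mat3 p)ˣ) : Mat3 p) _ _ ∈ _
      rw [Units.val_one]
      simp [Matrix.one_apply, zero_mem_pSet]
  mul_mem' := by
    intro g h hg hh
    have hgh : g * h = mkG p (((g.1 : Mat3 p) 0 1) + ((h.1 : Mat3 p) 0 1))
        (((g.1 : Mat3 p) 1 2) + ((h.1 : Mat3 p) 1 2))
        (((g.1 : Mat3 p) 0 2) + ((h.1 : Mat3 p) 0 2) +
          ((g.1 : Mat3 p) 0 1) * ((h.1 : Mat3 p) 1 2)) := by
      conv_lhs => rw [heis_eta p g, heis_eta p h]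
      rw [mkG_mul]
    show _ ∧ _
    rw [hgh, entry12, entry02]
    exact ⟨pSet_add p hg.1 hh.1,
      pSet_add p (pSet_add p hg.2 hh.2) (pSet_mul_left p _ hh.1)⟩
  inv_mem' := by
    intro g hg
    have hgi : g⁻¹ = mkG p (-((g.1 : Mat3 p) 0 1)) (-((g.1 : Mat3 p) 1 2))
        (((g.1 : Mat3 p) 0 1) * ((g.1 : Mat3 p) 1 2) - ((g.1 : Mat3 p) 0 2)) := by
      conv_lhs => rw [heis_eta p g]
      rw [mkG_inv]
    show _ ∧ _
    rw [hgi, entry12, entry02]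
    refine ⟨pSet_neg p hg.1, ?_⟩
    rw [sub_eq_add_neg]
    exact pSet_add p (pSet_mul_left p _ hg.1) (pSet_neg p hg.2)

lemma isClosed_Hbc : IsClosed ((Hbc p : Set ↥(heisenberg p))) := by
  have : (Hbc p : Set ↥(heisenberg p)) =
      ((fun g : ↥(heisenberg p) => (g.1 : Mat3 p) 1 2) ⁻¹' pSet p) ∩
      ((fun g : ↥(heisenberg p) => (g.1 : Mat3 p) 0 2) ⁻¹' pSet p) := rfl
  rw [this]
  exact ((isClosed_pSet p).preimage (continuous_entry p 1 2)).inter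
    ((isClosed_pSet p).preimage (continuous_entry p 0 2))

/-- subgroup with entry (1,2) in pℤₚ -/
def Hb : Subgroup ↥(heisenberg p) where
  carrier := {g | (g.1 : Mat3 p) 1 2 ∈ pSet p}
  one_mem' := by
    show (((1 : ↥(heisenberg p)) : (Mat3 p)ˣ) : Mat3 p) 1 2 ∈ pSet p
    rw [OneMemClass.coe_one, Units.val_one]
    simpa [Matrix.one_apply] using zero_mem_pSet p
  mul_mem' := by
    intro g h hg hh
    have hgh : g * h = mkG p (((g.1 : Mat3 p) 0 1) + ((h.1 : Mat3 p) 0 1))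
        (((g.1 : Mat3 p) 1 2) + ((h.1 : Mat3 p) 1 2))
        (((g.1 : Mat3 p) 0 2) + ((h.1 : Mat3 p) 0 2) +
          ((g.1 : Mat3 p) 0 1) * ((h.1 : Mat3 p) 1 2)) := by
      conv_lhs => rw [heis_eta p g, heis_eta p h]
      rw [mkG_mul]
    show _ ∈ pSet p
    rw [hgh, entry12]
    exact pSet_add p hg hh
  inv_mem' := by
    intro g hg
    have hgi : g⁻¹ = mkG p (-((g.1 : Mat3 p) 0 1)) (-((g.1 : Mat3 p) 1 2))
        (((g.1 : Mat3 p) 0 1) * ((g.1 : Mat3 p) 1 2) - ((g.1 : Mat3 p) 0 2)) := by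
      conv_lhs => rw [heis_eta p g]
      rw [mkG_inv]
    show _ ∈ pSet p
    rw [hgi, entry12]
    exact pSet_neg p hg

lemma isClosed_Hb : IsClosed ((Hb p : Set ↥(heisenberg p))) := by
  have : (Hb p : Set ↥(heisenberg p)) =
      ((fun g : ↥(heisenberg p) => (g.1 : Mat3 p) 1 2) ⁻¹' pSet p) := rfl
  rw [this]
  exact (isClosed_pSet p).preimage (continuous_entry p 1 2)

/-- subgroup with entries (0,1) and (1,2) zero -/
def Zc : Subgroup ↥(heisenberg p) where
  carrier := {g | (g.1 : Mat3 p) 0 1 = 0 ∧ (g.1 : Mat3 p) 1 2 = 0}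
  one_mem' := by
    constructor <;>
    · show ((1 : (Mat3 p)ˣ) : Mat3 p) _ _ = 0
      rw [Units.val_one]
      simp [Matrix.one_apply]
  mul_mem' := by
    intro g h hg hh
    have hgh : g * h = mkG p (((g.1 : Mat3 p) 0 1) + ((h.1 : Mat3 p) 0 1))
        (((g.1 : Mat3 p) 1 2) + ((h.1 : Mat3 p) 1 2))
        (((g.1 : Mat3 p) 0 2) + ((h.1 : Mat3 p) 0 2) +
          ((g.1 : Mat3 p) 0 1) * ((h.1 : Mat3 p) 1 2)) := by
      conv_lhs => rw [heis_eta p g, heis_eta p h]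
      rw [mkG_mul]
    show _ ∧ _
    rw [hgh, entry01, entry12, hg.1, hg.2, hh.1, hh.2]
    simp
  inv_mem' := by
    intro g hg
    have hgi : g⁻¹ = mkG p (-((g.1 : Mat3 p) 0 1)) (-((g.1 : Mat3 p) 1 2))
        (((g.1 : Mat3 p) 0 1) * ((g.1 : Mat3 p) 1 2) - ((g.1 : Mat3 p) 0 2)) := by
      conv_lhs => rw [heis_eta p g]
      rw [mkG_inv]
    show _ ∧ _
    rw [hgi, entry01, entry12, hg.1, hg.2]
    simp

lemma isClosed_Zc : IsClosed ((Zc p : Set ↥(heisenberg p))) := by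
  have : (Zc p : Set ↥(heisenberg p)) =
      ((fun g : ↥(heisenberg p) => (g.1 : Mat3 p) 0 1) ⁻¹' {0}) ∩
      ((fun g : ↥(heisenberg p) => (g.1 : Mat3 p) 1 2) ⁻¹' {0}) := rfl
  rw [this]
  exact ((isClosed_singleton).preimage (continuous_entry p 0 1)).inter
    ((isClosed_singleton).preimage (continuous_entry p 1 2))


lemma continuous_mkG {X : Type*} [TopologicalSpace X] (u v w : X → ℤ_[p])
    (hu : Continuous u) (hv : Continuous v) (hw : Continuous w) :
    Continuous fun x => mkG p (u x) (v x) (w x) := by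
  apply Continuous.subtype_mk
  apply Units.continuous_iff.mpr
  constructor
  · show Continuous fun x => (!![1, u x, w x; 0, 1, v x; 0, 0, 1] : Mat3 p)
    apply continuous_matrix
    intro i j
    fin_cases i <;> fin_cases j <;>
      simp [Matrix.vecHead, Matrix.vecTail] <;> fun_prop
  · show Continuous fun x => (!![1, -u x, u x * v x - w x; 0, 1, -v x; 0, 0, 1] : Mat3 p)
    apply continuous_matrix
    intro i j
    fin_cases i <;> fin_cases j <;>
      simp [Matrix.vecHead, Matrix.vecTail] <;> fun_prop

/-- Key density lemma. -/
lemma memA (f : ℤ_[p] → ↥(heisenberg p)) (hf : Continuous f)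
    (hadd : ∀ s t, f (s + t) = f s * f t)
    (K : Subgroup ↥(heisenberg p)) (hK : IsClosed (K : Set ↥(heisenberg p)))
    (d : ℤ_[p]) (hd : f d ∈ K) (c : ℤ_[p]) : f (d * c) ∈ K := by
  have hone : f 0 = 1 := by
    have h := hadd 0 0
    rw [add_zero] at h
    exact (right_eq_mul.mp h)
  have hn : ∀ n : ℕ, f (d * n) ∈ K := by
    intro n
    induction n with
    | zero => simpa [hone] using one_mem K
    | succ n ih =>
      have : d * ((n : ℤ_[p]) + 1) = d * n + d := by ring
      rw [Nat.cast_succ, this, hadd]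
      exact mul_mem ih hd
  have hdr : DenseRange ((↑) : ℕ → ℤ_[p]) := PadicInt.denseRange_natCast
  have hc : c ∈ closure (Set.range ((↑) : ℕ → ℤ_[p])) := hdr c
  have h2 : d * c ∈ closure ((fun t => d * t) '' Set.range ((↑) : ℕ → ℤ_[p])) := by
    have himg : d * c ∈ (fun t => d * t) '' closure (Set.range ((↑) : ℕ → ℤ_[p])) :=
      ⟨c, hc, rfl⟩
    exact image_closure_subset_closure_image (continuous_const.mul continuous_id) himg
  have h3 : ((fun t => d * t) '' Set.range ((↑) : ℕ → ℤ_[p])) ⊆ f ⁻¹' (K : Set _) := by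
    rintro _ ⟨_, ⟨n, rfl⟩, rfl⟩
    exact hn n
  exact closure_minimal h3 (hK.preimage hf) h2

lemma xH_eq : xH p = mkG p 1 0 0 := by
  apply Subtype.ext
  apply Units.ext
  show (1 + Matrix.single 0 1 1 : Mat3 p) = _
  ext i j
  fin_cases i <;> fin_cases j <;>
    simp [mkG, mkU, Matrix.one_apply, Matrix.single, Matrix.vecHead, Matrix.vecTail]

lemma yH_eq : yH p = mkG p 0 1 0 := by
  apply Subtype.ext
  apply Units.ext
  show (1 + Matrix.single 1 2 1 : Mat3 p) = _
  ext i j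
  fin_cases i <;> fin_cases j <;>
    simp [mkG, mkU, Matrix.one_apply, Matrix.single, Matrix.vecHead, Matrix.vecTail]

lemma zH_eq : zH p = mkG p 0 0 1 := by
  apply Subtype.ext
  apply Units.ext
  show (1 + Matrix.single 0 2 1 : Mat3 p) = _
  ext i j
  fin_cases i <;> fin_cases j <;>
    simp [mkG, mkU, Matrix.one_apply, Matrix.single, Matrix.vecHead, Matrix.vecTail]

noncomputable def H2 : Subgroup ↥(heisenberg p) :=
  (Subgroup.closure {xH p, (yH p) ^ p}).topologicalClosure

noncomputable def H1 : Subgroup ↥(heisenberg p) :=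
  (Subgroup.closure {xH p, (yH p) ^ p, zH p}).topologicalClosure

lemma frattiniTop_isClosed (H : Subgroup ↥(heisenberg p)) :
    IsClosed ((frattiniTop p H : Set ↥(heisenberg p))) :=
  Subgroup.isClosed_topologicalClosure _

lemma pow_mem_frattiniTop {H : Subgroup ↥(heisenberg p)} {h : ↥(heisenberg p)}
    (hh : h ∈ H) : h ^ p ∈ frattiniTop p H :=
  Subgroup.le_topologicalClosure _
    (Subgroup.subset_closure (Or.inl ⟨h, hh, rfl⟩))

lemma comm_mem_frattiniTop {H : Subgroup ↥(heisenberg p)} {h₁ h₂ : ↥(heisenberg p)}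
    (h1 : h₁ ∈ H) (h2 : h₂ ∈ H) : ⁅h₁, h₂⁆ ∈ frattiniTop p H :=
  Subgroup.le_topologicalClosure _
    (Subgroup.subset_closure (Or.inr ⟨h₁, h1, h₂, h2, rfl⟩))

lemma frattiniTop_mono {H K : Subgroup ↥(heisenberg p)} (h : H ≤ K) :
    frattiniTop p H ≤ frattiniTop p K := by
  apply Subgroup.topologicalClosure_minimal
  · refine le_trans (Subgroup.closure_mono ?_) (Subgroup.le_topologicalClosure _)
    rintro x (⟨g, hg, rfl⟩ | ⟨g₁, hg₁, g₂, hg₂, rfl⟩)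
    · exact Or.inl ⟨g, h hg, rfl⟩
    · exact Or.inr ⟨g₁, h hg₁, g₂, h hg₂, rfl⟩
  · exact Subgroup.isClosed_topologicalClosure _

lemma xH_mem_H2 : xH p ∈ H2 p :=
  Subgroup.le_topologicalClosure _ (Subgroup.subset_closure (Set.mem_insert _ _))

lemma yHp_mem_H2 : (yH p) ^ p ∈ H2 p :=
  Subgroup.le_topologicalClosure _
    (Subgroup.subset_closure (Set.mem_insert_of_mem _ rfl))

lemma yHp_eq : (yH p) ^ p = mkG p 0 (p:ℤ_[p]) 0 := by
  rw [yH_eq, mkG_pow]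
  exact mkG_eqargs p (by ring) (by ring) (by push_cast; ring)

lemma xHp_eq : (xH p) ^ p = mkG p (p:ℤ_[p]) 0 0 := by
  rw [xH_eq, mkG_pow]
  exact mkG_eqargs p (by ring) (by ring) (by push_cast; ring)

lemma zHp_eq : (zH p) ^ p = mkG p 0 0 (p:ℤ_[p]) := by
  rw [zH_eq, mkG_pow]
  exact mkG_eqargs p (by ring) (by ring) (by push_cast; ring)

lemma zHp_comm : (zH p) ^ p = ⁅xH p, (yH p) ^ p⁆ := by
  rw [zHp_eq, xH_eq, yHp_eq, mkG_comm]
  exact mkG_eqargs p (by ring) (by ring) (by ring)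

lemma zHp_mem : (zH p) ^ p ∈ frattiniTop p (H2 p) := by
  rw [zHp_comm]
  exact comm_mem_frattiniTop p (xH_mem_H2 p) (yHp_mem_H2 p)

lemma memC (s : ℤ_[p]) : mkG p 0 0 ((p:ℤ_[p]) * s) ∈ frattiniTop p (H2 p) := by
  refine memA p (fun t => mkG p 0 0 t) ?_ ?_ _ (frattiniTop_isClosed p _) (p:ℤ_[p]) ?_ s
  · exact continuous_mkG p _ _ _ continuous_const continuous_const continuous_id
  · intro s t
    rw [mkG_mul]
    exact mkG_eqargs p (by ring) (by ring) (by ring)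
  · show mkG p 0 0 (p:ℤ_[p]) ∈ _
    rw [← zHp_eq]
    exact zHp_mem p

lemma memAa (s : ℤ_[p]) : mkG p ((p:ℤ_[p]) * s) 0 0 ∈ frattiniTop p (H2 p) := by
  refine memA p (fun t => mkG p t 0 0) ?_ ?_ _ (frattiniTop_isClosed p _) (p:ℤ_[p]) ?_ s
  · exact continuous_mkG p _ _ _ continuous_id continuous_const continuous_const
  · intro s t
    rw [mkG_mul]
    exact mkG_eqargs p (by ring) (by ring) (by ring)
  · show mkG p (p:ℤ_[p]) 0 0 ∈ _
    rw [← xHp_eq]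
    exact pow_mem_frattiniTop p (xH_mem_H2 p)

lemma memBb (s : ℤ_[p]) : mkG p 0 ((p:ℤ_[p]) * ((p:ℤ_[p]) * s)) 0 ∈ frattiniTop p (H2 p) := by
  have h := memA p (fun t => mkG p 0 t 0)
    (continuous_mkG p _ _ _ continuous_const continuous_id continuous_const)
    (fun s t => by rw [mkG_mul]; exact mkG_eqargs p (by ring) (by ring) (by ring))
    _ (frattiniTop_isClosed p (H2 p)) ((p:ℤ_[p]) * (p:ℤ_[p])) ?_ s
  · have e : (p:ℤ_[p]) * (p:ℤ_[p]) * s = (p:ℤ_[p]) * ((p:ℤ_[p]) * s) := by ring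
    rwa [e] at h
  · have : ((yH p) ^ p) ^ p = mkG p 0 ((p:ℤ_[p]) * (p:ℤ_[p])) 0 := by
      rw [yHp_eq, mkG_pow]
      exact mkG_eqargs p (by ring) (by ring) (by push_cast; ring)
    show mkG p 0 ((p:ℤ_[p]) * (p:ℤ_[p])) 0 ∈ _
    rw [← this]
    exact pow_mem_frattiniTop p (yHp_mem_H2 p)

lemma T_mem (α β γ : ℤ_[p]) :
    mkG p ((p:ℤ_[p]) * α) ((p:ℤ_[p]) * ((p:ℤ_[p]) * β)) ((p:ℤ_[p]) * γ) ∈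
      frattiniTop p (H2 p) := by
  have key : mkG p ((p:ℤ_[p]) * α) ((p:ℤ_[p]) * ((p:ℤ_[p]) * β)) ((p:ℤ_[p]) * γ) =
      mkG p ((p:ℤ_[p]) * α) 0 0 * mkG p 0 ((p:ℤ_[p]) * ((p:ℤ_[p]) * β)) 0 *
        mkG p 0 0 ((p:ℤ_[p]) * (γ - α * ((p:ℤ_[p]) * ((p:ℤ_[p]) * β)))) := by
    rw [mkG_mul, mkG_mul]
    exact mkG_eqargs p (by ring) (by ring) (by ring)
  rw [key]
  exact mul_mem (mul_mem (memAa p α) (memBb p β)) (memC p _)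

lemma xH_mem_Hbc : xH p ∈ Hbc p := by
  constructor
  · rw [xH_eq, entry12]; exact zero_mem_pSet p
  · rw [xH_eq, entry02]; exact zero_mem_pSet p

lemma yHp_mem_Hbc : (yH p) ^ p ∈ Hbc p := by
  constructor
  · rw [yHp_eq, entry12]; exact ⟨1, by ring⟩
  · rw [yHp_eq, entry02]; exact zero_mem_pSet p

lemma H2_le_Hbc : H2 p ≤ Hbc p := by
  apply Subgroup.topologicalClosure_minimal
  · rw [Subgroup.closure_le]
    rintro g (rfl | rfl)
    · exact xH_mem_Hbc p
    · exact yHp_mem_Hbc p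
  · exact isClosed_Hbc p

lemma zH_not_mem_H2 : zH p ∉ H2 p := by
  intro hz
  have := (H2_le_Hbc p hz).2
  rw [zH_eq, entry02] at this
  exact one_not_mem_pSet p this

lemma H1_le_Hb : H1 p ≤ Hb p := by
  apply Subgroup.topologicalClosure_minimal
  · rw [Subgroup.closure_le]
    rintro g (rfl | rfl | rfl)
    · show _ ∈ pSet p
      rw [xH_eq, entry12]; exact zero_mem_pSet p
    · show _ ∈ pSet p
      rw [yHp_eq, entry12]; exact ⟨1, by ring⟩
    · show _ ∈ pSet p
      rw [zH_eq, entry12]; exact zero_mem_pSet p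
  · exact isClosed_Hb p

lemma zcl_le_Zc : (Subgroup.closure {zH p}).topologicalClosure ≤ Zc p := by
  apply Subgroup.topologicalClosure_minimal
  · rw [Subgroup.closure_le]
    rintro g rfl
    constructor
    · rw [zH_eq, entry01]
    · rw [zH_eq, entry12]
  · exact isClosed_Zc p

lemma frattini_zcl_le : frattiniTop p ((Subgroup.closure {zH p}).topologicalClosure) ≤
    frattiniTop p (H2 p) := by
  apply Subgroup.topologicalClosure_minimal
  · rw [Subgroup.closure_le]
    rintro g (⟨h, hh, rfl⟩ | ⟨h₁, hh₁, h₂, hh₂, rfl⟩)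
    · have hz := zcl_le_Zc p hh
      have he : h = mkG p 0 0 ((h.1 : Mat3 p) 0 2) := by
        conv_lhs => rw [heis_eta p h]
        rw [hz.1, hz.2]
      rw [he, mkG_pow]
      have : mkG p ((p:ℤ_[p])*0) ((p:ℤ_[p])*0)
          ((p:ℤ_[p]) * ((h.1 : Mat3 p) 0 2) + ((p.choose 2 : ℕ):ℤ_[p]) * (0*0)) =
          mkG p 0 0 ((p:ℤ_[p]) * ((h.1 : Mat3 p) 0 2)) :=
        mkG_eqargs p (by ring) (by ring) (by ring)
      rw [this]
      exact memC p _
    · have hz₁ := zcl_le_Zc p hh₁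
      have hz₂ := zcl_le_Zc p hh₂
      have he₁ : h₁ = mkG p 0 0 ((h₁.1 : Mat3 p) 0 2) := by
        conv_lhs => rw [heis_eta p h₁]
        rw [hz₁.1, hz₁.2]
      have he₂ : h₂ = mkG p 0 0 ((h₂.1 : Mat3 p) 0 2) := by
        conv_lhs => rw [heis_eta p h₂]
        rw [hz₂.1, hz₂.2]
      rw [he₁, he₂, mkG_comm]
      have : mkG p 0 0 ((0:ℤ_[p]) * 0 - 0 * 0) =
          mkG p 0 0 ((p:ℤ_[p]) * 0) := mkG_eqargs p rfl rfl (by ring)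
      rw [this]
      exact memC p 0
  · exact frattiniTop_isClosed p _

lemma frattini_H1_le : frattiniTop p (H1 p) ≤ frattiniTop p (H2 p) := by
  apply Subgroup.topologicalClosure_minimal
  · rw [Subgroup.closure_le]
    rintro g (⟨h, hh, rfl⟩ | ⟨h₁, hh₁, h₂, hh₂, rfl⟩)
    · obtain ⟨b₀, hb₀⟩ := H1_le_Hb p hh
      have hb₀' : (p:ℤ_[p]) * b₀ = ((h.1 : Mat3 p) 1 2) := hb₀
      set a := (h.1 : Mat3 p) 0 1
      set c := (h.1 : Mat3 p) 0 2
      have he : h = mkG p a ((p:ℤ_[p]) * b₀) c := by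
        conv_lhs => rw [heis_eta p h]
        rw [← hb₀']
      rw [he, mkG_pow]
      have : mkG p ((p:ℤ_[p])*a) ((p:ℤ_[p])*((p:ℤ_[p]) * b₀))
          ((p:ℤ_[p])*c + ((p.choose 2 : ℕ):ℤ_[p]) * (a*((p:ℤ_[p]) * b₀))) =
          mkG p ((p:ℤ_[p])*a) ((p:ℤ_[p])*((p:ℤ_[p]) * b₀))
          ((p:ℤ_[p]) * (c + ((p.choose 2 : ℕ):ℤ_[p]) * (a * b₀))) :=
        mkG_eqargs p rfl rfl (by ring)
      rw [this]
      exact T_mem p _ _ _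
    · obtain ⟨b₁, hb₁⟩ := H1_le_Hb p hh₁
      obtain ⟨b₂, hb₂⟩ := H1_le_Hb p hh₂
      have hb₁' : (p:ℤ_[p]) * b₁ = ((h₁.1 : Mat3 p) 1 2) := hb₁
      have he₁ : h₁ = mkG p ((h₁.1 : Mat3 p) 0 1) ((p:ℤ_[p]) * b₁) ((h₁.1 : Mat3 p) 0 2) := by
        conv_lhs => rw [heis_eta p h₁]
        rw [← hb₁']
      have hb₂' : (p:ℤ_[p]) * b₂ = ((h₂.1 : Mat3 p) 1 2) := hb₂
      have he₂ : h₂ = mkG p ((h₂.1 : Mat3 p) 0 1) ((p:ℤ_[p]) * b₂) ((h₂.1 : Mat3 p) 0 2) := by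
        conv_lhs => rw [heis_eta p h₂]
        rw [← hb₂']
      rw [he₁, he₂, mkG_comm]
      have : mkG p 0 0 (((h₁.1 : Mat3 p) 0 1) * ((p:ℤ_[p]) * b₂) -
          ((h₂.1 : Mat3 p) 0 1) * ((p:ℤ_[p]) * b₁)) =
          mkG p 0 0 ((p:ℤ_[p]) * (((h₁.1 : Mat3 p) 0 1) * b₂ - ((h₂.1 : Mat3 p) 0 1) * b₁)) :=
        mkG_eqargs p rfl rfl (by ring)
      rw [this]
      exact memC p _
  · exact frattiniTop_isClosed p _

lemma H2_le_H1 : H2 p ≤ H1 p := by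
  apply Subgroup.topologicalClosure_minimal
  · refine le_trans (Subgroup.closure_mono ?_) (Subgroup.le_topologicalClosure _)
    intro g hg
    rcases hg with rfl | rfl
    · exact Set.mem_insert _ _
    · exact Set.mem_insert_of_mem _ (Set.mem_insert _ _)
  · exact Subgroup.isClosed_topologicalClosure _

lemma frattini_eq : frattiniTop p (H1 p) = frattiniTop p (H2 p) :=
  le_antisymm (frattini_H1_le p) (frattiniTop_mono p (H2_le_H1 p))

lemma zH_mem_H1 : zH p ∈ H1 p :=
  Subgroup.le_topologicalClosure _
    (Subgroup.subset_closure (Set.mem_insert_of_mem _ (Set.mem_insert_of_mem _ rfl)))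
/-- In the Heisenberg pro-`p` group `G ⊆ GL₃(ℤ_p)`, with `x = I + E₁₂`,
`y = I + E₂₃`, `z = I + E₁₃` and `H` the closure of the subgroup generated by `x` and
`y ^ p`, one has `z ^ p ∈ Φ(H)` and `z ∉ H`; consequently `Φ(⟨z⟩) ⊆ Φ(H)` although
`⟨z⟩ ⊄ H`, so `G` is neither Frattini-resistant nor Frattini-injective. -/
theorem heisenberg_not_frattiniResistant :
    (zH p) ^ p ∈ frattiniTop p
        ((Subgroup.closure {xH p, (yH p) ^ p}).topologicalClosure) ∧
      zH p ∉ (Subgroup.closure {xH p, (yH p) ^ p}).topologicalClosure ∧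
      frattiniTop p ((Subgroup.closure {zH p}).topologicalClosure) ≤
        frattiniTop p ((Subgroup.closure {xH p, (yH p) ^ p}).topologicalClosure) ∧
      ¬ (Subgroup.closure {zH p}).topologicalClosure ≤
        (Subgroup.closure {xH p, (yH p) ^ p}).topologicalClosure ∧
      ¬ FrattiniResistant p ↥(heisenberg p) ∧
      ¬ FrattiniInjective p ↥(heisenberg p) := by
  have fgZ : IsTopFG ((Subgroup.closure {zH p}).topologicalClosure) :=
    ⟨{zH p}, Set.finite_singleton _, rfl⟩
  have fg2 : IsTopFG ((Subgroup.closure {xH p, (yH p) ^ p}).topologicalClosure) :=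
    ⟨{xH p, (yH p) ^ p}, (Set.finite_singleton _).insert _, rfl⟩
  have fg1 : IsTopFG (H1 p) :=
    ⟨{xH p, (yH p) ^ p, zH p}, ((Set.finite_singleton _).insert _).insert _, rfl⟩
  have hzcl : (Subgroup.closure {zH p}).topologicalClosure ≤ H2 p → False := by
    intro hle
    exact zH_not_mem_H2 p
      (hle (Subgroup.le_topologicalClosure _ (Subgroup.subset_closure rfl)))
  refine ⟨zHp_mem p, zH_not_mem_H2 p, frattini_zcl_le p, hzcl, ?_, ?_⟩
  · intro hFR
    exact hzcl ((hFR _ _ fgZ fg2).mp (frattini_zcl_le p))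
  · intro hFI
    have h12 : H1 p = H2 p := hFI _ _ fg1 fg2 (frattini_eq p)
    exact zH_not_mem_H2 p (h12 ▸ zH_mem_H1 p)
end
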